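/- Let R be an almost Dedekind domain and X a subset of Max(R) that is clopen and compact in the inverse topology. Then I := ⋂_{P ∈ X} P is a nonzero radical ideal of R with V(I) ∩ Max(R) = X. -/

import Mathlib

def AlmostDedekind (R : Type*) [CommRing R] [IsDomain R] : Prop :=
  ∀ M : MaximalSpectrum R, IsDiscreteValuationRing (Localization.AtPrime M.asIdeal)

/-- The inverse topology on the maximal spectrum. -/
def invTop (R : Type*) [CommRing R] : TopologicalSpace (MaximalSpectrum R) :=
  .generateFrom {s | ∃ I : Ideal R, I.FG ∧ s = {M | I ≤ M.asIdeal}}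

/-- Points of an open set in the inverse topology have basic neighbourhoods. -/
lemma invTop_exists_basic {R : Type*} [CommRing R] {U : Set (MaximalSpectrum R)}
    (hU : @IsOpen _ (invTop R) U) :
    ∀ M ∈ U, ∃ I : Ideal R, I.FG ∧ I ≤ M.asIdeal ∧
      {N : MaximalSpectrum R | I ≤ N.asIdeal} ⊆ U := by
  have hU' : TopologicalSpace.GenerateOpen
      {s | ∃ I : Ideal R, I.FG ∧ s = {M : MaximalSpectrum R | I ≤ M.asIdeal}} U := hU
  clear hU
  induction hU' with
  | basic s hs =>
    obtain ⟨I, hI, rfl⟩ := hs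
    exact fun M hM => ⟨I, hI, hM, fun _ h => h⟩
  | univ =>
    exact fun M _ => ⟨⊥, Submodule.fg_bot, bot_le, fun _ _ => trivial⟩
  | inter s t _ _ ihs iht =>
    intro M hM
    obtain ⟨I, hIfg, hIM, hIs⟩ := ihs M hM.1
    obtain ⟨J, hJfg, hJM, hJt⟩ := iht M hM.2
    exact ⟨I ⊔ J, Submodule.FG.sup hIfg hJfg, sup_le hIM hJM,
      fun N hN => ⟨hIs (show I ≤ N.asIdeal from le_trans le_sup_left hN), hJt (show J ≤ N.asIdeal from le_trans le_sup_right hN)⟩⟩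
  | sUnion S _ ih =>
    intro M hM
    obtain ⟨s, hsS, hMs⟩ := hM
    obtain ⟨I, h1, h2, h3⟩ := ih s hsS M hMs
    exact ⟨I, h1, h2, fun N hN => ⟨s, hsS, h3 hN⟩⟩

/-- Let `R` be an almost Dedekind domain and `X ⊆ Max(R)` clopen and compact in the
inverse topology.  Then `I := ⋂_{P ∈ X} P` is a nonzero radical ideal with
`V(I) ∩ Max(R) = X`. -/
theorem stmt12 {R : Type*} [CommRing R] [IsDomain R] (hR : AlmostDedekind R)
    (X : Set (MaximalSpectrum R))
    (hclopen : @IsClopen _ (invTop R) X) (hcomp : @IsCompact _ (invTop R) X) :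
    (⨅ P ∈ X, P.asIdeal) ≠ ⊥ ∧ (⨅ P ∈ X, P.asIdeal).IsRadical ∧
      {M : MaximalSpectrum R | (⨅ P ∈ X, P.asIdeal) ≤ M.asIdeal} = X := by
  classical
  letI := invTop R
  -- every maximal ideal is nonzero, since the localization is a DVR
  have hne : ∀ M : MaximalSpectrum R, M.asIdeal ≠ ⊥ := by
    intro M hbot
    haveI := hR M
    have h1 : IsLocalRing.maximalIdeal (Localization.AtPrime M.asIdeal) ≠ ⊥ :=
      IsDiscreteValuationRing.not_a_field _
    apply h1
    rw [← Localization.AtPrime.map_eq_maximalIdeal]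
    exact le_bot_iff.mp ((Ideal.map_mono hbot.le).trans Ideal.map_bot.le)
  -- for each point of X, choose a nonzero f.g. basic neighbourhood inside X
  have hchoose : ∀ M : MaximalSpectrum R, M ∈ X → ∃ K : Ideal R, K ≠ ⊥ ∧ K.FG ∧
      M ∈ {N : MaximalSpectrum R | K ≤ N.asIdeal} ∧
      {N : MaximalSpectrum R | K ≤ N.asIdeal} ⊆ X := by
    intro M hM
    obtain ⟨I, hIfg, hIM, hIsub⟩ := invTop_exists_basic hclopen.isOpen M hM
    obtain ⟨a, haM, ha0⟩ := Submodule.exists_mem_ne_zero_of_ne_bot (hne M)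
    refine ⟨I ⊔ Ideal.span {a}, ?_, Submodule.FG.sup hIfg (Submodule.fg_span_singleton a), ?_,
      fun N hN => hIsub (show I ≤ N.asIdeal from le_trans le_sup_left hN)⟩
    · intro h
      apply ha0
      have : a ∈ (⊥ : Ideal R) := h ▸ Submodule.mem_sup_right (Ideal.subset_span (Set.mem_singleton a))
      simpa using this
    · exact sup_le hIM ((Ideal.span_singleton_le_iff_mem _).mpr haM)
  choose! K hK0 hKfg hKmem hKsub using hchoose
  -- the basic sets cover X; extract a finite subcover
  have hcover : X ⊆ ⋃ M : X, {N : MaximalSpectrum R | K M ≤ N.asIdeal} := by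
    intro M hM
    exact Set.mem_iUnion.mpr ⟨⟨M, hM⟩, hKmem M hM⟩
  have hopen : ∀ M : X, IsOpen {N : MaximalSpectrum R | K M ≤ N.asIdeal} :=
    fun M => TopologicalSpace.GenerateOpen.basic _ ⟨K M, hKfg M M.2, rfl⟩
  obtain ⟨t, ht⟩ := hcomp.elim_finite_subcover _ hopen hcover
  set J : Ideal R := ∏ M ∈ t, K M with hJ
  -- X = V(J)
  have hXV : X = {N : MaximalSpectrum R | J ≤ N.asIdeal} := by
    ext N
    constructor
    · intro hN
      obtain ⟨M, hMt, hMN⟩ := Set.mem_iUnion₂.mp (ht hN)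
      exact le_trans (le_trans Ideal.prod_le_inf (Finset.inf_le hMt)) hMN
    · intro hN
      obtain ⟨M, hMt, hMN⟩ := (N.2.isPrime.prod_le).mp hN
      exact hKsub M M.2 hMN
  have hJ0 : J ≠ ⊥ := by
    refine Finset.prod_induction _ (fun I => I ≠ ⊥) (fun a b ha hb h => ?_) ?_
      (fun M _ => hK0 M M.2)
    · rcases Ideal.mul_eq_bot.mp h with h | h
      · exact ha h
      · exact hb h
    · simp
  have hJle : J ≤ ⨅ P ∈ X, P.asIdeal :=
    le_iInf₂ fun P hP => (le_of_eq hXV hP : J ≤ P.asIdeal)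
  refine ⟨fun h => hJ0 (le_bot_iff.mp (h ▸ hJle)), ?_, ?_⟩
  · -- radical
    intro x hx
    obtain ⟨n, hn⟩ := hx
    simp only [Ideal.mem_iInf] at hn ⊢
    exact fun P hP => P.2.isPrime.mem_of_pow_mem n (hn P hP)
  · -- V(I) = X
    apply Set.Subset.antisymm
    · intro N hN
      rw [hXV]
      exact le_trans hJle hN
    · intro N hN
      exact (iInf₂_le N hN : (⨅ P ∈ X, P.asIdeal) ≤ N.asIdeal)
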